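/- arXiv:2007.05755 — 6 statements merged into one kernel-verified Lean document; each statement's English description precedes it below -/
import Mathlib

section
/- Let 0 < α < 1 and let x : ℝ → ℝ be continuously differentiable on [t-ω, t] with ω > 0. Then ∫_{t-ω}^{t} (x(t) - x(τ)) · x'(τ) / (t-τ)^α dτ ≥ 0. -/
open MeasureTheory

theorem stmt0 (α ω t : ℝ) (x : ℝ → ℝ) (hα0 : 0 < α) (hα1 : α < 1) (hω : 0 < ω)
    (hx : ContDiffOn ℝ 1 x (Set.Icc (t - ω) t)) :
    0 ≤ ∫ τ in (t - ω)..t, (x t - x τ) * deriv x τ / (t - τ) ^ α := by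
  set a := t - ω with ha_def
  have hat : a < t := by rw [ha_def]; linarith
  set g : ℝ → ℝ := fun τ => (x t - x τ) * deriv x τ * (t - τ) ^ (-α) with hg_def
  -- the integrand equals g on Icc a t
  have heq : Set.EqOn (fun τ => (x t - x τ) * deriv x τ / (t - τ) ^ α) g (Set.Icc a t) := by
    intro τ hτ
    simp only [hg_def]
    rw [Real.rpow_neg (by linarith [hτ.2] : (0:ℝ) ≤ t - τ)]
    ring
  -- continuity facts
  have hxc : ContinuousOn x (Set.Icc a t) := hx.continuousOn
  set D : ℝ → ℝ := derivWithin x (Set.Icc a t) with hD_def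
  have hDc : ContinuousOn D (Set.Icc a t) :=
    hx.continuousOn_derivWithin (uniqueDiffOn_Icc hat) le_rfl
  obtain ⟨M, hM⟩ := isCompact_Icc.exists_bound_of_continuousOn hDc
  have hM0 : 0 ≤ M := le_trans (norm_nonneg _) (hM t (Set.right_mem_Icc.2 hat.le))
  have hdiffon : DifferentiableOn ℝ x (Set.Icc a t) := hx.differentiableOn one_ne_zero
  have hderiv : ∀ τ ∈ Set.Ioo a t, HasDerivAt x (deriv x τ) τ := fun τ hτ =>
    ((hdiffon τ (Set.Ioo_subset_Icc_self hτ)).differentiableAt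
      (Icc_mem_nhds hτ.1 hτ.2)).hasDerivAt
  have hderivbound : ∀ τ ∈ Set.Ioo a t, |deriv x τ| ≤ M := by
    intro τ hτ
    have : derivWithin x (Set.Icc a t) τ = deriv x τ :=
      derivWithin_of_mem_nhds (Icc_mem_nhds hτ.1 hτ.2)
    rw [← this]
    exact hM τ (Set.Ioo_subset_Icc_self hτ)
  have hlip : ∀ y ∈ Set.Icc a t, |x t - x y| ≤ M * (t - y) := by
    intro y hy
    have h1 := Convex.norm_image_sub_le_of_norm_derivWithin_le hdiffon hM (convex_Icc a t)
      hy (Set.right_mem_Icc.2 hat.le)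
    rw [Real.norm_eq_abs, Real.norm_eq_abs] at h1
    calc |x t - x y| ≤ M * |t - y| := h1
    _ = M * (t - y) := by rw [abs_of_nonneg (by linarith [hy.2])]
  -- integrability of g on [a, t]
  have hgint : IntervalIntegrable g volume a t := by
    rw [intervalIntegrable_iff_integrableOn_Ioc_of_le hat.le,
      integrableOn_Ioc_iff_integrableOn_Ioo]
    have hmeas : AEStronglyMeasurable g (volume.restrict (Set.Ioo a t)) := by
      have h1 : AEStronglyMeasurable (fun τ => x t - x τ) (volume.restrict (Set.Ioo a t)) :=
        ((continuousOn_const.sub (hxc.mono Set.Ioo_subset_Icc_self)).aestronglyMeasurable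
          measurableSet_Ioo)
      have h2 : AEStronglyMeasurable (deriv x) (volume.restrict (Set.Ioo a t)) :=
        (measurable_deriv x).aestronglyMeasurable.restrict
      have h3 : AEStronglyMeasurable (fun τ : ℝ => (t - τ) ^ (-α))
          (volume.restrict (Set.Ioo a t)) := by
        refine ContinuousOn.aestronglyMeasurable ?_ measurableSet_Ioo
        exact ((continuous_const.sub continuous_id).continuousOn).rpow_const
          fun τ hτ => Or.inl (by intro hc; have hc' : t - τ = 0 := hc; nlinarith [hτ.2, sub_eq_zero.1 hc'])
      exact (h1.mul h2).mul h3
    refine Integrable.mono' (integrable_const (M * M * ω ^ (1 - α))) hmeas ?_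
    refine (ae_restrict_mem measurableSet_Ioo).mono fun τ hτ => ?_
    have htτ : 0 < t - τ := by linarith [hτ.2]
    simp only [hg_def, Real.norm_eq_abs]
    rw [abs_mul, abs_mul]
    have e1 : |x t - x τ| ≤ M * (t - τ) := hlip τ (Set.Ioo_subset_Icc_self hτ)
    have e2 : |deriv x τ| ≤ M := hderivbound τ hτ
    have e3 : |(t - τ) ^ (-α)| = (t - τ) ^ (-α) := abs_of_nonneg (Real.rpow_nonneg htτ.le _)
    have hτω : t - τ ≤ ω := by
      have := hτ.1; rw [ha_def] at this; linarith
    calc |x t - x τ| * |deriv x τ| * |(t - τ) ^ (-α)|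
        ≤ (M * (t - τ)) * M * (t - τ) ^ (-α) := by
          rw [e3]
          apply mul_le_mul _ le_rfl (Real.rpow_nonneg htτ.le _)
            (mul_nonneg (mul_nonneg hM0 htτ.le) hM0)
          exact mul_le_mul e1 e2 (abs_nonneg _) (by nlinarith [abs_nonneg (x t - x τ)])
      _ = M * M * ((t - τ) * (t - τ) ^ (-α)) := by ring
      _ = M * M * (t - τ) ^ (1 - α) := by
          rw [show (1:ℝ) - α = 1 + (-α) by ring,
            Real.rpow_one_add' htτ.le (by intro hc; nlinarith)]
      _ ≤ M * M * ω ^ (1 - α) := by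
          have := Real.rpow_le_rpow htτ.le hτω (by linarith : (0:ℝ) ≤ 1 - α)
          nlinarith
  have hgIcc : IntegrableOn g (Set.Icc a t) volume := by
    rw [integrableOn_Icc_iff_integrableOn_Ioc]
    exact (intervalIntegrable_iff_integrableOn_Ioc_of_le hat.le).1 hgint
  -- the lower bound for truncated integrals
  have key : ∀ ε ∈ Set.Ioo (0:ℝ) ω,
      -(1/2) * M^2 * ε ^ ((2:ℝ) - α) ≤ ∫ τ in a..(t - ε), g τ := by
    intro ε hε
    set b := t - ε with hb_def
    have hab : a < b := by rw [ha_def, hb_def]; linarith [hε.2]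
    have hbt : b < t := by rw [hb_def]; linarith [hε.1]
    set h : ℝ → ℝ := fun τ => -(1/2) * ((x t - x τ)^2 * (t - τ) ^ (-α)) with hh_def
    set h' : ℝ → ℝ := fun τ =>
      (x t - x τ) * deriv x τ * (t - τ) ^ (-α)
        - α/2 * (x t - x τ)^2 * (t - τ) ^ (-α - 1) with hh'_def
    have hIb : Set.Icc a b ⊆ Set.Icc a t := Set.Icc_subset_Icc le_rfl hbt.le
    have hpos : ∀ τ ∈ Set.Icc a b, 0 < t - τ := fun τ hτ => by linarith [hτ.2]
    -- derivative
    have hder : ∀ τ ∈ Set.Ioo a b, HasDerivAt h (h' τ) τ := by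
      intro τ hτ
      have hτt : τ ∈ Set.Ioo a t := ⟨hτ.1, hτ.2.trans hbt⟩
      have htτ : 0 < t - τ := by linarith [hτt.2]
      have hu : HasDerivAt (fun τ => (x t - x τ)^2)
          (2 * (x t - x τ)^1 * (0 - deriv x τ)) τ :=
        ((hasDerivAt_const τ (x t)).sub (hderiv τ hτt)).pow 2
      have hv : HasDerivAt (fun τ : ℝ => t - τ) (0 - 1) τ :=
        (hasDerivAt_const τ t).sub (hasDerivAt_id τ)
      have hw : HasDerivAt (fun τ : ℝ => (t - τ) ^ (-α))
          ((-α * (t - τ) ^ (-α - 1)) * (0 - 1)) τ :=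
        (Real.hasDerivAt_rpow_const (Or.inl htτ.ne')).comp τ hv
      have hE : HasDerivAt h
          ((-(1/2) : ℝ) * ((2 * (x t - x τ)^1 * (0 - deriv x τ)) * (t - τ) ^ (-α)
            + (x t - x τ)^2 * ((-α * (t - τ) ^ (-α - 1)) * (0 - 1)))) τ :=
        (hu.mul hw).const_mul (-(1/2) : ℝ)
      have hEq : h' τ = (-(1/2) : ℝ) * ((2 * (x t - x τ)^1 * (0 - deriv x τ)) * (t - τ) ^ (-α)
            + (x t - x τ)^2 * ((-α * (t - τ) ^ (-α - 1)) * (0 - 1))) := by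
        simp only [hh'_def]
        ring
      rw [hEq]
      exact hE
    -- continuity of h on [a, b]
    have hcont : ContinuousOn h (Set.Icc a b) := by
      apply continuousOn_const.mul
      apply ((continuousOn_const.sub (hxc.mono hIb)).pow 2).mul
      exact ((continuous_const.sub continuous_id).continuousOn).rpow_const
        fun τ hτ => Or.inl (hpos τ hτ).ne'
    -- integrability of h'
    have hq : ContinuousOn (fun τ => α/2 * (x t - x τ)^2 * (t - τ) ^ (-α - 1))
        (Set.Icc a b) := by
      apply (continuousOn_const.mul ((continuousOn_const.sub (hxc.mono hIb)).pow 2)).mul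
      exact ((continuous_const.sub continuous_id).continuousOn).rpow_const
        fun τ hτ => Or.inl (hpos τ hτ).ne'
    have hqint : IntervalIntegrable (fun τ => α/2 * (x t - x τ)^2 * (t - τ) ^ (-α - 1))
        volume a b := by
      apply ContinuousOn.intervalIntegrable
      rwa [Set.uIcc_of_le hab.le]
    have hgint' : IntervalIntegrable g volume a b :=
      hgint.mono_set (by rw [Set.uIcc_of_le hab.le, Set.uIcc_of_le hat.le]; exact hIb)
    have hh'int : IntervalIntegrable h' volume a b := by
      have : h' = fun τ => g τ - α/2 * (x t - x τ)^2 * (t - τ) ^ (-α - 1) := by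
        funext τ; simp only [hh'_def, hg_def]
      rw [this]
      exact hgint'.sub hqint
    -- FTC
    have hftc : ∫ τ in a..b, h' τ = h b - h a :=
      intervalIntegral.integral_eq_sub_of_hasDeriv_right_of_le hab.le hcont
        (fun τ hτ => (hder τ hτ).hasDerivWithinAt) hh'int
    -- comparison
    have hmono : ∫ τ in a..b, h' τ ≤ ∫ τ in a..b, g τ := by
      apply intervalIntegral.integral_mono_on hab.le hh'int hgint'
      intro τ hτ
      simp only [hh'_def, hg_def]
      have : 0 ≤ α/2 * (x t - x τ)^2 * (t - τ) ^ (-α - 1) := by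
        apply mul_nonneg (mul_nonneg (by linarith) (sq_nonneg _))
        exact Real.rpow_nonneg (hpos τ hτ).le _
      linarith
    -- bound on h b - h a
    have hhb : -(1/2) * M^2 * ε ^ ((2:ℝ) - α) ≤ h b := by
      simp only [hh_def]
      have hxb : |x t - x b| ≤ M * ε := by
        have := hlip b ⟨by linarith [hε.2], hbt.le⟩
        rwa [show t - b = ε by rw [hb_def]; ring] at this
      have hsq : (x t - x b)^2 ≤ (M * ε)^2 := by
        rw [← sq_abs]
        exact pow_le_pow_left₀ (abs_nonneg _) hxb 2
      have htb : t - b = ε := by rw [hb_def]; ring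
      rw [htb]
      have hε0 : (0:ℝ) < ε := hε.1
      have : (x t - x b)^2 * ε ^ (-α) ≤ (M * ε)^2 * ε ^ (-α) :=
        mul_le_mul_of_nonneg_right hsq (Real.rpow_nonneg hε0.le _)
      have e : (M * ε)^2 * ε ^ (-α) = M^2 * ε ^ ((2:ℝ) - α) := by
        rw [mul_pow, show ((2:ℝ) - α) = 2 + (-α) by ring, Real.rpow_add hε0,
          Real.rpow_two]
        ring
      nlinarith [this, e]
    have hha : h a ≤ 0 := by
      simp only [hh_def]
      have : 0 ≤ (x t - x a)^2 * (t - a) ^ (-α) :=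
        mul_nonneg (sq_nonneg _) (Real.rpow_nonneg (by linarith) _)
      nlinarith
    calc -(1/2) * M^2 * ε ^ ((2:ℝ) - α) ≤ h b - h a := by linarith
    _ = ∫ τ in a..b, h' τ := hftc.symm
    _ ≤ ∫ τ in a..b, g τ := hmono
  -- limit argument
  set F : ℝ → ℝ := fun s => ∫ τ in a..s, g τ with hF_def
  have hFcont : ContinuousOn F (Set.Icc a t) := by
    rw [hF_def, ← Set.uIcc_of_le hat.le]
    apply intervalIntegral.continuousOn_primitive_interval
    rwa [Set.uIcc_of_le hat.le]
  have hmap : Filter.Tendsto (fun ε => t - ε) (nhdsWithin 0 (Set.Ioi 0)) (nhdsWithin t (Set.Icc a t)) := by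
    apply tendsto_nhdsWithin_of_tendsto_nhds_of_eventually_within
    · have : Filter.Tendsto (fun ε : ℝ => t - ε) (nhds 0) (nhds (t - 0)) :=
        (continuous_const.sub continuous_id).tendsto 0
      rw [sub_zero] at this
      exact this.mono_left nhdsWithin_le_nhds
    · filter_upwards [Ioo_mem_nhdsGT_of_mem ⟨le_refl (0:ℝ), hω⟩] with ε hε
      exact ⟨by rw [ha_def]; linarith [hε.2], by linarith [hε.1]⟩
  have hFt : Filter.Tendsto (fun ε => F (t - ε)) (nhdsWithin 0 (Set.Ioi 0)) (nhds (F t)) :=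
    ((hFcont t (Set.right_mem_Icc.2 hat.le)).tendsto).comp hmap
  have hlow : Filter.Tendsto (fun ε : ℝ => -(1/2) * M^2 * ε ^ ((2:ℝ) - α))
      (nhdsWithin 0 (Set.Ioi 0)) (nhds 0) := by
    have hc : ContinuousAt (fun ε : ℝ => ε ^ ((2:ℝ) - α)) 0 :=
      Real.continuousAt_rpow_const 0 _ (Or.inr (by linarith))
    have h1 : Filter.Tendsto (fun ε : ℝ => ε ^ ((2:ℝ) - α)) (nhds 0) (nhds 0) := by
      have h2 := hc.tendsto
      rwa [Real.zero_rpow (by linarith : (2:ℝ) - α ≠ 0)] at h2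
    have h2 := (h1.mono_left (nhdsWithin_le_nhds : nhdsWithin (0:ℝ) (Set.Ioi 0) ≤ nhds 0)).const_mul (-(1/2) * M^2)
    rw [mul_zero] at h2
    convert h2 using 2 with ε
  have h0F : (0:ℝ) ≤ F t := by
    refine le_of_tendsto_of_tendsto hlow hFt ?_
    filter_upwards [Ioo_mem_nhdsGT_of_mem ⟨le_refl (0:ℝ), hω⟩] with ε hε
    exact key ε hε
  calc (0:ℝ) ≤ F t := h0F
  _ = ∫ τ in a..t, (x t - x τ) * deriv x τ / (t - τ) ^ α := by
      apply intervalIntegral.integral_congr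
      rw [Set.uIcc_of_le hat.le]
      exact fun τ hτ => (heq hτ).symm
end

section
/- Let 0 < α < 1, ω > 0, t₀ ∈ ℝ, and x : ℝ → ℝ continuously differentiable. With the short memory fractional derivative D̃x(t) = (1/Γ(1-α)) ∫_{s_ω(t)}^{t} (t-τ)^{-α} x'(τ) dτ (where s_ω(t) = max(t₀, t-ω)), for every t ≥ t₀: (1/2) D̃(x²)(t) ≤ x(t) · D̃x(t). -/
open MeasureTheory

/-- Short memory fractional derivative with window ω and base point t₀. -/
noncomputable def smD (α ω t₀ : ℝ) (f : ℝ → ℝ) (t : ℝ) : ℝ :=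
  (1 / Real.Gamma (1 - α)) * ∫ τ in (max t₀ (t - ω))..t, (t - τ) ^ (-α) * deriv f τ

theorem stmt4 (α ω t₀ t : ℝ) (hα0 : 0 < α) (hα1 : α < 1) (hω : 0 < ω)
    (x : ℝ → ℝ) (hx : ContDiff ℝ 1 x) (ht : t₀ ≤ t) :
    (1 / 2) * smD α ω t₀ (fun τ => (x τ) ^ 2) t ≤ x t * smD α ω t₀ x t := by
  classical
  open intervalIntegral Filter Topology in
  set a := max t₀ (t - ω) with ha_def
  have ha : a ≤ t := max_le ht (by linarith)
  have hC : 0 < 1 / Real.Gamma (1 - α) :=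
    div_pos one_pos (Real.Gamma_pos_of_pos (by linarith))
  have hxd : ∀ τ, HasDerivAt x (deriv x τ) τ :=
    fun τ => ((hx.differentiable one_ne_zero) τ).hasDerivAt
  have hxc : Continuous (deriv x) := hx.continuous_deriv le_rfl
  have hx2d : ∀ τ : ℝ, deriv (fun s => x s ^ 2) τ = 2 * x τ * deriv x τ := by
    intro τ
    have h := ((hxd τ).pow 2).deriv
    have h' : deriv (x ^ 2) τ = 2 * x τ * deriv x τ := by simpa using h
    exact h'
  rcases eq_or_lt_of_le ha with heq | hlt
  · unfold smD
    rw [← ha_def, heq]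
    simp
  -- k : the kernel
  set k : ℝ → ℝ := fun τ => (t - τ) ^ (-α) with hk_def
  have hk_int : IntervalIntegrable k volume a t := by
    have h := intervalIntegrable_rpow' (a := t - a) (b := t - t) (r := -α) (by linarith)
    have h2 := h.comp_sub_left t
    simpa [hk_def, sub_sub_cancel] using h2
  have hI1 : IntervalIntegrable (fun τ => k τ * deriv x τ) volume a t :=
    hk_int.mul_continuousOn hxc.continuousOn
  have hI2 : IntervalIntegrable (fun τ => k τ * (x τ * deriv x τ)) volume a t :=
    hk_int.mul_continuousOn (((hx.continuous).mul hxc)).continuousOn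
  -- the key quantity
  set J : ℝ := ∫ τ in a..t, k τ * ((x t - x τ) * deriv x τ) with hJ_def
  -- reduce goal to 0 ≤ J
  have hsplit : x t * (∫ τ in a..t, k τ * deriv x τ)
      - (1/2) * ∫ τ in a..t, k τ * deriv (fun s => x s ^ 2) τ = J := by
    have e2 : (∫ τ in a..t, k τ * deriv (fun s => x s ^ 2) τ)
        = ∫ τ in a..t, 2 * (k τ * (x τ * deriv x τ)) := by
      apply intervalIntegral.integral_congr
      intro τ _
      simp only [hx2d]; ring
    have e3 : J = x t * (∫ τ in a..t, k τ * deriv x τ)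
        - ∫ τ in a..t, k τ * (x τ * deriv x τ) := by
      rw [hJ_def, ← intervalIntegral.integral_const_mul,
        ← intervalIntegral.integral_sub (hI1.const_mul _) hI2]
      apply intervalIntegral.integral_congr
      intro τ _
      ring
    rw [e2, intervalIntegral.integral_const_mul, e3]
    ring
  have hJ : 0 ≤ J := by
    -- F b = partial integral
    set f : ℝ → ℝ := fun τ => k τ * ((x t - x τ) * deriv x τ) with hf_def
    have hf_int : IntervalIntegrable f volume a t :=
      hk_int.mul_continuousOn
        (((continuous_const.sub hx.continuous).mul hxc)).continuousOn
    set F : ℝ → ℝ := fun b => ∫ τ in a..b, f τ with hF_def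
    -- bound on deriv x on [a,t]
    obtain ⟨M, hM⟩ : ∃ M, ∀ τ ∈ Set.Icc a t, ‖deriv x τ‖ ≤ M := by
      obtain ⟨M, hM⟩ := (isCompact_Icc (a := a) (b := t)).exists_bound_of_continuousOn
        hxc.continuousOn
      exact ⟨M, hM⟩
    have hM0 : 0 ≤ M := le_trans (norm_nonneg _) (hM t ⟨ha, le_rfl⟩)
    -- lower bound for F b for b in [a, t)
    have key : ∀ b ∈ Set.Ico a t, -(M^2 * (t - b) ^ (2 - α)) ≤ F b := by
      intro b hb
      obtain ⟨hab, hbt⟩ := hb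
      set g : ℝ → ℝ := fun τ => (x t - x τ)^2 with hg_def
      have hgd : ∀ τ : ℝ, HasDerivAt g (-2 * ((x t - x τ) * deriv x τ)) τ := by
        intro τ
        have h := ((hasDerivAt_const τ (x t)).sub (hxd τ)).pow 2
        refine h.congr_deriv ?_
        simp only [Pi.sub_apply]; ring
      have hkd : ∀ τ ∈ Set.uIcc a b, HasDerivAt k (α * (t - τ) ^ (-α - 1)) τ := by
        intro τ hτ
        rw [Set.uIcc_of_le hab] at hτ
        have hpos : 0 < t - τ := by
          have := hτ.2
          linarith
        have h := ((hasDerivAt_const τ t).sub (hasDerivAt_id' (x := τ))).rpow_const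
          (p := -α) (Or.inl (ne_of_gt hpos))
        refine h.congr_deriv ?_
        simp only [Pi.sub_apply]; ring
      have hcont_kd : IntervalIntegrable (fun τ => α * (t - τ) ^ (-α - 1)) volume a b := by
        apply ContinuousOn.intervalIntegrable
        apply ContinuousOn.mul continuousOn_const
        apply ContinuousOn.rpow_const
        · exact (continuousOn_const.sub continuousOn_id)
        · intro τ hτ
          rw [Set.uIcc_of_le hab] at hτ
          left
          have := hτ.2
          intro h0
          have : t = τ := by linarith [sub_eq_zero.mp h0]
          linarith [hτ.2, hbt, this ▸ hτ.2]
      have hgd_int : IntervalIntegrable (fun τ => -2 * ((x t - x τ) * deriv x τ)) volume a b := by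
        apply ContinuousOn.intervalIntegrable
        exact (continuousOn_const.mul
          ((continuous_const.sub hx.continuous).mul hxc).continuousOn)
      have ibp := intervalIntegral.integral_mul_deriv_eq_deriv_mul
        hkd (fun τ _ => hgd τ) hcont_kd hgd_int
      -- ∫ k * g' = k b g b - k a g a - ∫ k' * g
      have hFb : F b = -(1/2) * (k b * g b - k a * g a - ∫ τ in a..b, (α * (t - τ)^(-α-1)) * g τ) := by
        rw [← ibp, hF_def]
        simp only
        rw [← intervalIntegral.integral_const_mul]
        apply intervalIntegral.integral_congr
        intro τ _
        simp only [hf_def, hg_def]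
        ring
      have hbpos : 0 < t - b := by linarith
      have hapos : 0 < t - a := by linarith
      -- nonneg pieces
      have h1 : 0 ≤ k a * g a := by
        apply mul_nonneg
        · exact Real.rpow_nonneg (le_of_lt hapos) _
        · positivity
      have h2 : 0 ≤ ∫ τ in a..b, (α * (t - τ)^(-α-1)) * g τ := by
        apply intervalIntegral.integral_nonneg hab
        intro τ hτ
        apply mul_nonneg
        · apply mul_nonneg (le_of_lt hα0)
          exact Real.rpow_nonneg (by linarith [hτ.2]) _
        · positivity
      -- bound k b * g b
      have hxb : ‖x t - x b‖ ≤ M * (t - b) := by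
        have := intervalIntegral.integral_eq_sub_of_hasDerivAt
          (f := x) (f' := deriv x) (a := b) (b := t)
          (fun τ _ => hxd τ)
          (hxc.intervalIntegrable b t)
        rw [← this]
        have := intervalIntegral.norm_integral_le_of_norm_le_const
          (C := M) (f := deriv x) (a := b) (b := t) ?_
        · calc ‖∫ τ in b..t, deriv x τ‖ ≤ M * |t - b| := this
            _ = M * (t - b) := by rw [abs_of_pos hbpos]
        · intro τ hτ
          apply hM
          rw [Set.uIoc_of_le (le_of_lt hbt)] at hτ
          exact ⟨le_trans hab (le_of_lt hτ.1), hτ.2⟩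
      have hkbgb : k b * g b ≤ M^2 * (t - b) ^ (2 - α) := by
        have hg_le : g b ≤ (M * (t - b))^2 := by
          rw [hg_def]
          simp only
          calc (x t - x b)^2 = ‖x t - x b‖^2 := by rw [Real.norm_eq_abs, sq_abs]
            _ ≤ (M * (t - b))^2 := by
                apply pow_le_pow_left₀ (norm_nonneg _) hxb
        calc k b * g b ≤ k b * (M * (t-b))^2 := by
              apply mul_le_mul_of_nonneg_left hg_le
              exact Real.rpow_nonneg (le_of_lt hbpos) _
          _ = M^2 * (t - b) ^ (2 - α) := by
              rw [hk_def]
              simp only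
              rw [mul_pow, show ((t-b):ℝ)^(2:ℕ) = (t-b)^((2:ℝ)) by
                rw [← Real.rpow_natCast]; norm_num]
              rw [show (2 : ℝ) - α = -α + 2 by ring, Real.rpow_add hbpos]
              ring
      rw [hFb]
      have : -(1/2) * (k b * g b - k a * g a - ∫ τ in a..b, (α * (t - τ)^(-α-1)) * g τ)
          ≥ -(1/2) * (k b * g b) := by nlinarith
      have h3 : -(1/2) * (k b * g b) ≥ -(M^2 * (t - b) ^ (2 - α)) := by
        have hk_nonneg : 0 ≤ k b * g b := by
          apply mul_nonneg (Real.rpow_nonneg (le_of_lt hbpos) _)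
          rw [hg_def]; positivity
        nlinarith
      linarith
    -- limit argument
    have hFcont : ContinuousOn F (Set.uIcc a t) :=
      intervalIntegral.continuousOn_primitive_interval' hf_int Set.left_mem_uIcc
    have hFt : F t = J := by rw [hF_def, hJ_def]
    have hne : (𝓝[<] t).NeBot := nhdsLT_neBot t
    have hev : ∀ᶠ b in 𝓝[<] t, b ∈ Set.Ico a t := by
      have h1 : ∀ᶠ b in 𝓝[<] t, b < t := eventually_mem_nhdsWithin
      have h2 : ∀ᶠ b in 𝓝[<] t, a < b := by
        apply eventually_nhdsWithin_of_eventually_nhds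
        exact eventually_gt_nhds hlt
      filter_upwards [h1, h2] with b hb1 hb2
      exact ⟨le_of_lt hb2, hb1⟩
    have hle : 𝓝[<] t ≤ 𝓝[Set.uIcc a t] t := by
      apply le_inf nhdsWithin_le_nhds
      rw [Filter.le_principal_iff]
      filter_upwards [hev] with b hb
      rw [Set.uIcc_of_le ha]
      exact ⟨hb.1, le_of_lt hb.2⟩
    have htmem : t ∈ Set.uIcc a t := Set.right_mem_uIcc
    have hF_tendsto : Filter.Tendsto F (𝓝[<] t) (𝓝 J) := by
      rw [← hFt]
      exact ((hFcont t htmem).mono_left hle)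
    have hbound_tendsto : Filter.Tendsto (fun b => -(M^2 * (t - b) ^ (2 - α)))
        (𝓝[<] t) (𝓝 0) := by
      have h1 : Filter.Tendsto (fun b : ℝ => t - b) (𝓝[<] t) (𝓝 0) := by
        have hc : Continuous (fun b : ℝ => t - b) := continuous_const.sub continuous_id
        have h := hc.tendsto t
        rw [sub_self] at h
        exact h.mono_left nhdsWithin_le_nhds
      have h2 : Filter.Tendsto (fun y : ℝ => y ^ (2 - α)) (𝓝 0) (𝓝 0) := by
        have hc : ContinuousAt (fun y : ℝ => y ^ (2 - α)) 0 :=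
          Real.continuousAt_rpow_const 0 (2 - α) (Or.inr (by linarith))
        have h0 : (0:ℝ) ^ (2 - α) = 0 := Real.zero_rpow (by linarith)
        simpa [h0] using hc.tendsto
      have h3 := (h2.comp h1).const_mul (M^2)
      simp only [mul_zero] at h3
      simpa using h3.neg
    have := le_of_tendsto_of_tendsto hbound_tendsto hF_tendsto ?_
    · simpa using this
    · filter_upwards [hev] with b hb
      exact key b hb
  -- conclude
  unfold smD
  rw [← ha_def]
  have := mul_nonneg (le_of_lt hC) hJ
  rw [← hsplit] at this
  nlinarith [this, hC]
end

section
/- Let 0 < α < 1, ω > 0, t₀ ∈ ℝ, and x : ℝ → ℝⁿ continuously differentiable. With the componentwise short memory fractional derivative D̃ (lower limit s_ω(t) = max(t₀, t-ω)), for every t ≥ t₀: (1/2) D̃(‖x‖²)(t) ≤ ⟨x(t), D̃x(t)⟩, where ⟨·,·⟩ is the Euclidean inner product. -/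
open MeasureTheory

section smdAux
open intervalIntegral Filter Topology


lemma smd_rpow_int {α a t : ℝ} (hα1 : α < 1) :
    IntervalIntegrable (fun τ => (t - τ) ^ (-α)) volume a t := by
  have h0 : IntervalIntegrable (fun u : ℝ => u ^ (-α)) volume 0 (t - a) :=
    intervalIntegral.intervalIntegrable_rpow' (by linarith)
  have := h0.comp_sub_left t
  simpa using this.symm

lemma smd_int {α a t : ℝ} (hα1 : α < 1) {c : ℝ → ℝ} (hc : Continuous c) :
    IntervalIntegrable (fun τ => (t - τ) ^ (-α) * c τ) volume a t :=
  (smd_rpow_int hα1).mul_continuousOn hc.continuousOn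

lemma smd_key {α a t : ℝ} (hα0 : 0 < α) (hα1 : α < 1) (hat : a < t)
    (g : ℝ → ℝ) (hg : ContDiff ℝ 1 g) (hg0 : ∀ s, 0 ≤ g s) (hgt : g t = 0) :
    ∫ τ in a..t, (t - τ) ^ (-α) * deriv g τ ≤ 0 := by
  have hgd : Differentiable ℝ g := hg.differentiable one_ne_zero
  have hg' : Continuous (deriv g) := hg.continuous_deriv le_rfl
  set f : ℝ → ℝ := fun τ => (t - τ) ^ (-α) * deriv g τ with hfdef
  have hfint : IntervalIntegrable f volume a t := smd_int hα1 hg'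
  -- bound on deriv g
  obtain ⟨M, hM⟩ := (isCompact_Icc (a := a) (b := t)).exists_bound_of_continuousOn
    hg'.continuousOn
  -- bound on g near t
  have hgb : ∀ b ∈ Set.Icc a t, g b ≤ M * (t - b) := by
    intro b hb
    have hsub : ∀ s ∈ Set.uIcc b t, DifferentiableAt ℝ g s := fun s _ => hgd s
    have hint : IntervalIntegrable (deriv g) volume b t := hg'.intervalIntegrable b t
    have heq : ∫ s in b..t, deriv g s = g t - g b :=
      intervalIntegral.integral_deriv_eq_sub hsub hint
    have hbd : ‖∫ s in b..t, deriv g s‖ ≤ M * |t - b| := by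
      apply intervalIntegral.norm_integral_le_of_norm_le_const
      intro s hs
      apply hM
      rw [Set.uIoc_of_le hb.2] at hs
      exact ⟨hb.1.trans hs.1.le, hs.2⟩
    rw [heq, hgt, zero_sub, Real.norm_eq_abs, abs_neg, abs_of_nonneg (hg0 b)] at hbd
    calc g b ≤ M * |t - b| := hbd
    _ = M * (t - b) := by rw [abs_of_nonneg (by linarith [hb.2])]
  -- the key monotonicity bound on partial integrals
  have hkey : ∀ b ∈ Set.Ioo a t, ∫ s in a..b, f s ≤ (t - b) ^ (-α) * g b := by
    intro b hb
    set H : ℝ → ℝ := fun u => (t - u) ^ (-α) * g u - ∫ s in a..u, f s with hHdef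
    have hder : ∀ u ∈ Set.Ioo a t, HasDerivAt H (α * (t - u) ^ (-α - 1) * g u) u := by
      intro u hu
      have htu : (0:ℝ) < t - u := by linarith [hu.2]
      have h1 : HasDerivAt (fun v : ℝ => t - v) (-1) u := (hasDerivAt_id u).const_sub t
      have h2 : HasDerivAt (fun v : ℝ => (t - v) ^ (-α)) ((-α * (t - u) ^ (-α - 1)) * (-1)) u :=
        (Real.hasDerivAt_rpow_const (Or.inl htu.ne')).comp u h1
      have h3 := h2.fun_mul (hgd u).hasDerivAt
      have h4 : HasDerivAt (fun v => ∫ s in a..v, f s) (f u) u := by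
        apply intervalIntegral.integral_hasDerivAt_right
        · exact hfint.mono_set (Set.uIcc_subset_uIcc Set.left_mem_uIcc
            (by rw [Set.uIcc_of_le hat.le]; exact ⟨hu.1.le, hu.2.le⟩))
        · exact (((measurable_const.sub measurable_id).pow measurable_const).mul
            hg'.measurable).stronglyMeasurable.stronglyMeasurableAtFilter
        · exact (((continuous_const.sub continuous_id).continuousAt).rpow_const
            (Or.inl htu.ne')).mul hg'.continuousAt
      have h5 := h3.fun_sub h4
      refine h5.congr_deriv ?_
      simp only [hfdef]
      ring
    have hmono : MonotoneOn H (Set.Icc a b) := by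
      apply monotoneOn_of_deriv_nonneg (convex_Icc a b)
      · apply ContinuousOn.sub
        · apply ContinuousOn.mul
          · apply ContinuousOn.rpow_const
            · exact (continuous_const.sub continuous_id).continuousOn
            · intro s hs
              exact Or.inl (by simp; linarith [hs.2, hb.2])
          · exact hgd.continuous.continuousOn
        · have hint2 : IntegrableOn f (Set.uIcc a b) volume := by
            have h6 : IntervalIntegrable f volume a b :=
              hfint.mono_set (Set.uIcc_subset_uIcc Set.left_mem_uIcc
                (by rw [Set.uIcc_of_le hat.le]; exact ⟨hb.1.le, hb.2.le⟩))
            rw [Set.uIcc_of_le hb.1.le]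
            exact (intervalIntegrable_iff_integrableOn_Icc_of_le hb.1.le).1 h6
          have := intervalIntegral.continuousOn_primitive_interval hint2
          exact this.mono (by rw [Set.uIcc_of_le (hb.1.le)])
      · intro u hu
        rw [interior_Icc] at hu
        exact ((hder u ⟨hu.1, hu.2.trans hb.2⟩).differentiableAt).differentiableWithinAt
      · intro u hu
        rw [interior_Icc] at hu
        have hu2 : u ∈ Set.Ioo a t := ⟨hu.1, hu.2.trans hb.2⟩
        rw [(hder u hu2).deriv]
        have : (0:ℝ) < t - u := by linarith [hu2.2]
        have := Real.rpow_nonneg this.le (-α - 1)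
        have := hg0 u
        positivity
    have hab : H a ≤ H b := hmono ⟨le_rfl, hb.1.le⟩ ⟨hb.1.le, le_rfl⟩ hb.1.le
    have hHa : 0 ≤ H a := by
      simp only [hHdef, intervalIntegral.integral_same, sub_zero]
      exact mul_nonneg (Real.rpow_nonneg (by linarith) _) (hg0 a)
    simp only [hHdef, intervalIntegral.integral_same, sub_zero] at hab
    have h7 : 0 ≤ (t - a) ^ (-α) * g a :=
      mul_nonneg (Real.rpow_nonneg (by linarith) _) (hg0 a)
    linarith
  -- limit argument
  have hIoo : t ∈ closure (Set.Ioo a t) := by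
    rw [closure_Ioo hat.ne]; exact ⟨hat.le, le_rfl⟩
  haveI hne : (𝓝[Set.Ioo a t] t).NeBot := mem_closure_iff_nhdsWithin_neBot.1 hIoo
  have hint3 : IntegrableOn f (Set.uIcc a t) volume := by
    rw [Set.uIcc_of_le hat.le]
    exact (intervalIntegrable_iff_integrableOn_Icc_of_le hat.le).1 hfint
  have hprim : Filter.Tendsto (fun b => ∫ s in a..b, f s) (𝓝[Set.Ioo a t] t)
      (𝓝 (∫ s in a..t, f s)) := by
    have h8 := (intervalIntegral.continuousOn_primitive_interval hint3) t
      (by rw [Set.uIcc_of_le hat.le]; exact ⟨hat.le, le_rfl⟩)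
    exact h8.mono_left (nhdsWithin_mono t (by
      rw [Set.uIcc_of_le hat.le]; exact Set.Ioo_subset_Icc_self))
  have hb0 : Filter.Tendsto (fun b => M * (t - b) ^ (1 - α)) (𝓝[Set.Ioo a t] t) (𝓝 0) := by
    have h1 : Filter.Tendsto (fun b : ℝ => t - b) (𝓝[Set.Ioo a t] t) (𝓝 0) := by
      have h9 : Filter.Tendsto (fun b : ℝ => t - b) (𝓝 t) (𝓝 (t - t)) :=
        ((continuous_const.sub continuous_id).tendsto t)
      rw [sub_self] at h9
      exact h9.mono_left nhdsWithin_le_nhds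
    have h2 : Filter.Tendsto (fun u : ℝ => u ^ (1 - α)) (𝓝 0) (𝓝 0) := by
      have h10 := (Real.continuousAt_rpow_const 0 (1 - α) (Or.inr (by linarith))).tendsto
      rwa [Real.zero_rpow (by linarith)] at h10
    simpa using Filter.Tendsto.const_mul M (h2.comp h1)
  have hev : ∀ᶠ b in 𝓝[Set.Ioo a t] t, (∫ s in a..b, f s) ≤ M * (t - b) ^ (1 - α) := by
    filter_upwards [self_mem_nhdsWithin] with b hb
    have h1 := hkey b hb
    have h2 : (t - b) ^ (-α) * g b ≤ (t - b) ^ (-α) * (M * (t - b)) :=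
      mul_le_mul_of_nonneg_left (hgb b ⟨hb.1.le, hb.2.le⟩)
        (Real.rpow_nonneg (by linarith [hb.2]) _)
    have h3 : (t - b) ^ (-α) * (M * (t - b)) = M * (t - b) ^ (1 - α) := by
      rw [show (1 - α) = -α + 1 by ring,
        Real.rpow_add_one (by intro h; nlinarith [hb.2] : t - b ≠ 0)]
      ring
    linarith
  exact le_of_tendsto_of_tendsto hprim hb0 hev

end smdAux

theorem stmt5 (n : ℕ) (α ω t₀ t : ℝ) (hα0 : 0 < α) (hα1 : α < 1) (hω : 0 < ω)
    (x : ℝ → EuclideanSpace ℝ (Fin n)) (hx : ContDiff ℝ 1 x) (ht : t₀ ≤ t) :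
    (1 / 2) * smD α ω t₀ (fun τ => ‖x τ‖ ^ 2) t
      ≤ ∑ i, x t i * smD α ω t₀ (fun τ => x τ i) t := by
  have hΓ : 0 < Real.Gamma (1 - α) := Real.Gamma_pos_of_pos (by linarith)
  set C : ℝ := 1 / Real.Gamma (1 - α) with hCdef
  have hC : 0 ≤ C := by positivity
  rcases eq_or_lt_of_le ht with h | h
  · have hae : max t₀ (t - ω) = t := by rw [← h]; exact max_eq_left (by linarith)
    simp [smD, hae]
  have hat : max t₀ (t - ω) < t := max_lt h (by linarith)
  set a : ℝ := max t₀ (t - ω) with hadef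
  -- components
  have hcomp : ∀ i : Fin n, ContDiff ℝ 1 (fun s => x s i) := fun i => by
    simpa [Function.comp_def] using (EuclideanSpace.proj (𝕜 := ℝ) i).contDiff.comp hx
  have hdi : ∀ (i : Fin n) (τ : ℝ), HasDerivAt (fun s => x s i) (deriv (fun s => x s i) τ) τ :=
    fun i τ => ((hcomp i).differentiable one_ne_zero τ).hasDerivAt
  have hdc : ∀ i : Fin n, Continuous (deriv (fun s => x s i)) := fun i =>
    (hcomp i).continuous_deriv le_rfl
  -- norm squared
  have hnorm : (fun τ => ‖x τ‖ ^ 2 : ℝ → ℝ) = fun τ => ∑ i, x τ i ^ 2 := by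
    funext τ
    rw [EuclideanSpace.norm_eq, Real.sq_sqrt (Finset.sum_nonneg fun i _ => by positivity)]
    simp [sq_abs]
  have hderivN : ∀ τ : ℝ, deriv (fun s => ∑ i, x s i ^ 2) τ
      = ∑ i, 2 * x τ i * deriv (fun s => x s i) τ := by
    intro τ
    have h1 : HasDerivAt (fun s => ∑ i, x s i ^ 2)
        (∑ i, (2:ℕ) * x τ i ^ (2 - 1) * deriv (fun s => x s i) τ) τ :=
      HasDerivAt.fun_sum fun i _ => (hdi i τ).fun_pow 2
    rw [h1.deriv]
    norm_num
  -- the auxiliary function g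
  set g : ℝ → ℝ := fun s => ∑ i, (x t i - x s i) ^ 2 with hgdef
  have hgc : ContDiff ℝ 1 g := ContDiff.sum fun i _ => (contDiff_const.sub (hcomp i)).pow 2
  have hderivg : ∀ τ : ℝ, deriv g τ
      = (∑ i, 2 * x τ i * deriv (fun s => x s i) τ)
        - 2 * ∑ i, x t i * deriv (fun s => x s i) τ := by
    intro τ
    have h1 : HasDerivAt g
        (∑ i, (2:ℕ) * (x t i - x τ i) ^ (2 - 1) * (0 - deriv (fun s => x s i) τ)) τ :=
      HasDerivAt.fun_sum fun i _ => ((hasDerivAt_const τ (x t i)).fun_sub (hdi i τ)).fun_pow 2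
    rw [h1.deriv, Finset.mul_sum, ← Finset.sum_sub_distrib]
    exact Finset.sum_congr rfl fun i _ => by push_cast; ring
  -- integrability facts
  have hint1 : IntervalIntegrable
      (fun τ => (t - τ) ^ (-α) * ∑ i, x t i * deriv (fun s => x s i) τ) volume a t :=
    smd_int hα1 (continuous_finset_sum _ fun i _ => continuous_const.mul (hdc i))
  have hint2 : IntervalIntegrable
      (fun τ => (t - τ) ^ (-α) * ∑ i, 2 * x τ i * deriv (fun s => x s i) τ) volume a t :=
    smd_int hα1 (continuous_finset_sum _ fun i _ =>
      (continuous_const.mul ((hcomp i).continuous)).mul (hdc i))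
  -- key inequality
  have hkey : ∫ τ in a..t, (t - τ) ^ (-α) * deriv g τ ≤ 0 :=
    smd_key hα0 hα1 hat g hgc
      (fun s => Finset.sum_nonneg fun i _ => sq_nonneg _) (by simp [hgdef])
  -- rewrite the sum side
  have hS : ∑ i, x t i * ∫ τ in a..t, (t - τ) ^ (-α) * deriv (fun s => x s i) τ
      = ∫ τ in a..t, (t - τ) ^ (-α) * ∑ i, x t i * deriv (fun s => x s i) τ := by
    have h1 : ∀ i : Fin n,
        x t i * ∫ τ in a..t, (t - τ) ^ (-α) * deriv (fun s => x s i) τ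
        = ∫ τ in a..t, (t - τ) ^ (-α) * (x t i * deriv (fun s => x s i) τ) := by
      intro i
      rw [← intervalIntegral.integral_const_mul]
      apply intervalIntegral.integral_congr
      intro τ _; ring
    rw [Finset.sum_congr rfl fun i _ => h1 i,
      ← intervalIntegral.integral_finset_sum (fun i _ =>
        smd_int hα1 (c := fun τ => x t i * deriv (fun s => x s i) τ) (continuous_const.mul (hdc i)))]
    apply intervalIntegral.integral_congr
    intro τ _
    simp only [Finset.mul_sum]
  -- the difference identity
  have hdiff : (∫ τ in a..t, (t - τ) ^ (-α) * ∑ i, x t i * deriv (fun s => x s i) τ)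
      - (1/2) * ∫ τ in a..t, (t - τ) ^ (-α) * ∑ i, 2 * x τ i * deriv (fun s => x s i) τ
      = -(1/2) * ∫ τ in a..t, (t - τ) ^ (-α) * deriv g τ := by
    rw [← intervalIntegral.integral_const_mul, ← intervalIntegral.integral_const_mul,
      ← intervalIntegral.integral_sub hint1 (hint2.const_mul (1/2))]
    apply intervalIntegral.integral_congr
    intro τ _
    simp only [hderivg]
    ring
  -- assemble
  simp only [smD, hnorm, ← hCdef, ← hadef]
  simp_rw [hderivN]
  have hgoal : (1/2) * ∫ τ in a..t, (t - τ) ^ (-α) * ∑ i, 2 * x τ i * deriv (fun s => x s i) τ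
      ≤ ∑ i, x t i * ∫ τ in a..t, (t - τ) ^ (-α) * deriv (fun s => x s i) τ := by
    rw [hS]
    nlinarith [hdiff, hkey]
  calc (1/2) * (C * ∫ τ in a..t, (t - τ) ^ (-α) * ∑ i, 2 * x τ i * deriv (fun s => x s i) τ)
      = C * ((1/2) * ∫ τ in a..t, (t - τ) ^ (-α) * ∑ i, 2 * x τ i * deriv (fun s => x s i) τ) := by
        ring
    _ ≤ C * ∑ i, x t i * ∫ τ in a..t, (t - τ) ^ (-α) * deriv (fun s => x s i) τ :=
        mul_le_mul_of_nonneg_left hgoal hC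
    _ = ∑ i, x t i * (C * ∫ τ in a..t, (t - τ) ^ (-α) * deriv (fun s => x s i) τ) := by
        rw [Finset.mul_sum]
        exact Finset.sum_congr rfl fun i _ => by ring
end

section
/- Let 0 < α < 1, ω > 0, t₀ ∈ ℝ, and x : [t₀, ∞) → ℝ continuously differentiable and nonnegative. Then for every t > t₀ + ω: the Caputo derivative with lower limit t₀ satisfies ᶜD^α_{t₀} x(t) ≤ D̃x(t) + x(t-ω)/(ω^α Γ(1-α)), where D̃ is the short memory derivative with lower limit t-ω. -/
open MeasureTheory

theorem stmt6 (α ω t₀ t : ℝ) (hα0 : 0 < α) (hα1 : α < 1) (hω : 0 < ω)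
    (x : ℝ → ℝ) (hx : ContDiffOn ℝ 1 x (Set.Ici t₀))
    (hpos : ∀ τ, t₀ ≤ τ → 0 ≤ x τ) (ht : t > t₀ + ω) :
    (1 / Real.Gamma (1 - α)) * ∫ τ in t₀..t, (t - τ) ^ (-α) * deriv x τ
      ≤ ((1 / Real.Gamma (1 - α)) * ∫ τ in (t - ω)..t, (t - τ) ^ (-α) * deriv x τ)
        + x (t - ω) / (ω ^ α * Real.Gamma (1 - α)) := by
  have hΓ : 0 < Real.Gamma (1 - α) := Real.Gamma_pos_of_pos (by linarith)
  have ht0 : t₀ < t - ω := by linarith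
  have htω : t - ω < t := by linarith
  set v' : ℝ → ℝ := fun τ => derivWithin x (Set.Ici t₀) τ with hv'def
  have hv'cont : ContinuousOn v' (Set.Ici t₀) :=
    hx.continuousOn_derivWithin (uniqueDiffOn_Ici t₀) le_rfl
  have hxdiff : DifferentiableOn ℝ x (Set.Ici t₀) := hx.differentiableOn one_ne_zero
  have hxd : ∀ τ ∈ Set.Ici t₀, HasDerivWithinAt x (v' τ) (Set.Ici t₀) τ :=
    fun τ hτ => (hxdiff τ hτ).hasDerivWithinAt
  have hderiv_eq : ∀ τ, t₀ < τ → deriv x τ = v' τ := by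
    intro τ hτ
    exact (derivWithin_of_mem_nhds (Ici_mem_nhds hτ)).symm
  -- congruence of integrals on subintervals of (t₀, t]
  have hcongr : ∀ a b : ℝ, t₀ ≤ a → t₀ ≤ b →
      (∫ τ in a..b, (t - τ) ^ (-α) * deriv x τ)
        = ∫ τ in a..b, (t - τ) ^ (-α) * v' τ := by
    intro a b ha hb
    apply intervalIntegral.integral_congr_ae
    filter_upwards with τ hτ
    have : t₀ < τ := lt_of_le_of_lt (le_min ha hb) hτ.1
    rw [hderiv_eq τ this]
  -- integrability of the kernel
  have hker : ∀ a b : ℝ, IntervalIntegrable (fun τ => (t - τ) ^ (-α)) volume a b := by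
    intro a b
    have h := (intervalIntegral.intervalIntegrable_rpow' (a := t - a) (b := t - b)
      (r := -α) (by linarith)).comp_sub_left t
    simpa using h
  have hg_int : ∀ a b : ℝ, t₀ ≤ a → t₀ ≤ b →
      IntervalIntegrable (fun τ => (t - τ) ^ (-α) * v' τ) volume a b := by
    intro a b ha hb
    apply (hker a b).mul_continuousOn
    apply hv'cont.mono
    intro τ hτ
    exact le_trans (le_min ha hb) hτ.1
  -- split the integral
  have hsplit : (∫ τ in t₀..t, (t - τ) ^ (-α) * v' τ)
      = (∫ τ in t₀..(t - ω), (t - τ) ^ (-α) * v' τ)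
        + ∫ τ in (t - ω)..t, (t - τ) ^ (-α) * v' τ :=
    (intervalIntegral.integral_add_adjacent_intervals
      (hg_int t₀ (t - ω) le_rfl ht0.le) (hg_int (t - ω) t ht0.le (by linarith))).symm
  -- integration by parts on [t₀, t-ω]
  have huIcc : Set.uIcc t₀ (t - ω) = Set.Icc t₀ (t - ω) := Set.uIcc_of_le ht0.le
  have hpos' : ∀ τ ∈ Set.Icc t₀ (t - ω), (0:ℝ) < t - τ := by
    intro τ hτ
    have := hτ.2
    linarith
  have hu : ∀ τ ∈ Set.uIcc t₀ (t - ω),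
      HasDerivWithinAt (fun τ => (t - τ) ^ (-α)) (α * (t - τ) ^ (-α - 1))
        (Set.uIcc t₀ (t - ω)) τ := by
    intro τ hτ
    rw [huIcc] at hτ
    have h1 : HasDerivAt (fun τ : ℝ => t - τ) (-1) τ := by
      simpa using (hasDerivAt_id' τ).const_sub t
    have h2 : HasDerivAt (fun y : ℝ => y ^ (-α)) (-α * (t - τ) ^ (-α - 1)) (t - τ) :=
      Real.hasDerivAt_rpow_const (Or.inl (ne_of_gt (hpos' τ hτ)))
    have := h2.comp τ h1
    simp only [mul_neg_one, neg_mul, neg_neg] at this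
    exact this.hasDerivWithinAt
  have hv : ∀ τ ∈ Set.uIcc t₀ (t - ω),
      HasDerivWithinAt x (v' τ) (Set.uIcc t₀ (t - ω)) τ := by
    intro τ hτ
    rw [huIcc] at hτ
    exact (hxd τ hτ.1).mono (by rw [huIcc]; exact fun y hy => hy.1)
  have hu'int : IntervalIntegrable (fun τ => α * (t - τ) ^ (-α - 1)) volume t₀ (t - ω) := by
    apply ContinuousOn.intervalIntegrable
    rw [huIcc]
    exact continuousOn_const.mul
      (((continuous_const.sub continuous_id).continuousOn).rpow_const
        (fun τ hτ => Or.inl (ne_of_gt (hpos' τ hτ))))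
  have hv'int : IntervalIntegrable v' volume t₀ (t - ω) := by
    apply ContinuousOn.intervalIntegrable
    apply hv'cont.mono
    rw [huIcc]
    exact fun τ hτ => hτ.1
  have hibp := intervalIntegral.integral_mul_deriv_eq_deriv_mul_of_hasDerivWithinAt
    hu hv hu'int hv'int
  -- the boundary/remainder terms are signed favorably
  have hrem : 0 ≤ ∫ τ in t₀..(t - ω), α * (t - τ) ^ (-α - 1) * x τ := by
    apply intervalIntegral.integral_nonneg ht0.le
    intro τ hτ
    have h1 : (0:ℝ) < t - τ := hpos' τ hτ
    have h2 : 0 ≤ x τ := hpos τ hτ.1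
    positivity
  have hbd : (t - t₀) ^ (-α) * x t₀ ≥ 0 := by
    have : (0:ℝ) < t - t₀ := by linarith
    have := hpos t₀ le_rfl
    positivity
  have hI1 : (∫ τ in t₀..(t - ω), (t - τ) ^ (-α) * v' τ)
      ≤ (t - (t - ω)) ^ (-α) * x (t - ω) := by
    rw [hibp]
    linarith
  have hω' : t - (t - ω) = ω := by ring
  rw [hω'] at hI1
  -- put everything together
  rw [hcongr t₀ t le_rfl (by linarith), hcongr (t - ω) t ht0.le (by linarith), hsplit]
  have hωα : ω ^ (-α) = (ω ^ α)⁻¹ := by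
    rw [Real.rpow_neg hω.le]
  have hfin : (1 / Real.Gamma (1 - α)) * (ω ^ (-α) * x (t - ω))
      = x (t - ω) / (ω ^ α * Real.Gamma (1 - α)) := by
    rw [hωα]
    rw [div_eq_mul_inv (x (t - ω)), mul_inv]
    ring
  have hΓ' : 0 < 1 / Real.Gamma (1 - α) := by positivity
  calc (1 / Real.Gamma (1 - α)) * ((∫ τ in t₀..(t - ω), (t - τ) ^ (-α) * v' τ)
        + ∫ τ in (t - ω)..t, (t - τ) ^ (-α) * v' τ)
      ≤ (1 / Real.Gamma (1 - α)) * ((ω ^ (-α) * x (t - ω))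
        + ∫ τ in (t - ω)..t, (t - τ) ^ (-α) * v' τ) := by
        apply mul_le_mul_of_nonneg_left _ hΓ'.le
        linarith
    _ = ((1 / Real.Gamma (1 - α)) * ∫ τ in (t - ω)..t, (t - τ) ^ (-α) * v' τ)
        + x (t - ω) / (ω ^ α * Real.Gamma (1 - α)) := by
        rw [← hfin]; ring
end

section
/- Let n be a positive integer, 0 < α < 1, ω > 0, and x : ℝ → ℝ continuously differentiable. Then for every t ≥ t₀ and m ≥ 1: D̃(x^{2^m})(t) ≤ 2 x^{2^{m-1}}(t) · D̃(x^{2^{m-1}})(t), where D̃ is the short memory fractional derivative with lower limit max(t₀, t-ω). -/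
open MeasureTheory

lemma smD_pow_int (α : ℝ) (hα0 : 0 < α) (hα1 : α < 1) (a t : ℝ) (hat : a ≤ t)
    (φ : ℝ → ℝ) (hφ : Continuous φ) :
    IntervalIntegrable (fun τ => (t - τ) ^ (-α) * φ τ) volume a t := by
  have hpow : IntervalIntegrable (fun τ => (t - τ) ^ (-α)) volume a t := by
    have h := (intervalIntegral.intervalIntegrable_rpow' (a := t - a) (b := t - t)
      (r := -α) (by linarith)).comp_sub_left t
    simpa using h
  exact hpow.mul_continuousOn hφ.continuousOn

/-- Key inequality: for `g` C¹ and `a < t`,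
`0 ≤ ∫_a^t (t-τ)^{-α} g'(τ) (g(t) - g(τ)) dτ`. -/
lemma key_nonneg (α : ℝ) (hα0 : 0 < α) (hα1 : α < 1) (a t : ℝ) (hat : a < t)
    (g : ℝ → ℝ) (hg : ContDiff ℝ 1 g) :
    0 ≤ ∫ τ in a..t, (t - τ) ^ (-α) * (deriv g τ * (g t - g τ)) := by
  have hgd : ∀ τ : ℝ, HasDerivAt g (deriv g τ) τ := fun τ =>
    ((hg.differentiable one_ne_zero) τ).hasDerivAt
  have hgc : Continuous g := hg.continuous
  have hg'c : Continuous (deriv g) := hg.continuous_deriv le_rfl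
  -- bound on deriv g on Icc a t
  obtain ⟨C, hC⟩ := (isCompact_Icc (a := a) (b := t)).exists_bound_of_continuousOn
    hg'c.continuousOn
  set L : ℝ := max C 0 with hL
  have hL0 : 0 ≤ L := le_max_right _ _
  have hLb : ∀ τ ∈ Set.Icc a t, ‖deriv g τ‖ ≤ L := fun τ hτ =>
    (hC τ hτ).trans (le_max_left _ _)
  -- Lipschitz bound
  have hLip : ∀ s ∈ Set.Icc a t, |g t - g s| ≤ L * (t - s) := by
    intro s hs
    have h1 : ∀ τ ∈ Set.Icc s t, HasDerivWithinAt g (deriv g τ) (Set.Icc s t) τ :=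
      fun τ _ => (hgd τ).hasDerivWithinAt
    have h2 : ∀ τ ∈ Set.Ico s t, ‖deriv g τ‖ ≤ L := fun τ hτ =>
      hLb τ ⟨hs.1.trans hτ.1, hτ.2.le⟩
    have := norm_image_sub_le_of_norm_deriv_le_segment' h1 h2 t
      (Set.right_mem_Icc.mpr hs.2)
    simpa [Real.norm_eq_abs] using this
  set h : ℝ → ℝ := fun τ => (t - τ) ^ (-α) * (deriv g τ * (g t - g τ)) with hh
  have hint : IntervalIntegrable h volume a t :=
    smD_pow_int α hα0 hα1 a t hat.le _ (hg'c.mul (continuous_const.sub hgc))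
  set F : ℝ → ℝ := fun τ => (g t - g τ) ^ 2 / 2 with hF
  have hFnn : ∀ τ, 0 ≤ F τ := fun τ => by positivity
  set u : ℝ → ℝ := fun τ => (t - τ) ^ (-α) * F τ with hu
  set I : ℝ → ℝ := fun s => ∫ τ in a..s, h τ with hI
  -- the main estimate for s in Ico a t
  have main : ∀ s ∈ Set.Ico a t, -u s ≤ I s := by
    intro s hs
    have hts : 0 < t - s := by linarith [hs.2]
    -- derivative of u on Icc a s
    have huder : ∀ τ ∈ Set.uIcc a s, HasDerivAt u
        (α * (t - τ) ^ (-α - 1) * F τ - h τ) τ := by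
      intro τ hτ
      rw [Set.uIcc_of_le hs.1] at hτ
      have htτ : 0 < t - τ := by linarith [hτ.2, hs.2]
      have h1 : HasDerivAt (fun τ : ℝ => (t - τ) ^ (-α)) (α * (t - τ) ^ (-α - 1)) τ := by
        have hinner : HasDerivAt (fun τ : ℝ => t - τ) (-1) τ := by
          simpa using (hasDerivAt_id τ).const_sub t
        have houter := Real.hasDerivAt_rpow_const (x := t - τ) (p := -α)
          (Or.inl htτ.ne')
        have := houter.comp τ hinner
        exact this.congr_deriv (by ring)
      have h2 : HasDerivAt F (-((g t - g τ) * deriv g τ)) τ := by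
        have hin : HasDerivAt (fun τ => g t - g τ) (-(deriv g τ)) τ :=
          (hgd τ).const_sub (g t)
        have := (hin.pow 2).div_const 2
        exact this.congr_deriv (by ring)
      have := h1.mul h2
      exact this.congr_deriv (by simp only [hh, hF]; ring)
    have hcont1 : ContinuousOn (fun τ => α * (t - τ) ^ (-α - 1) * F τ) (Set.uIcc a s) := by
      rw [Set.uIcc_of_le hs.1]
      apply ContinuousOn.mul
      · apply continuousOn_const.mul
        apply ContinuousOn.rpow_const
        · exact (continuous_const.sub continuous_id).continuousOn
        · intro τ hτ
          exact Or.inl (by simp only [Set.mem_Icc] at hτ; nlinarith [hτ.2, hs.2])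
      · exact (((continuous_const.sub hgc).pow 2).div_const 2).continuousOn
    have hcont2 : ContinuousOn h (Set.uIcc a s) := by
      rw [Set.uIcc_of_le hs.1]
      apply ContinuousOn.mul
      · apply ContinuousOn.rpow_const
        · exact (continuous_const.sub continuous_id).continuousOn
        · intro τ hτ
          exact Or.inl (by simp only [Set.mem_Icc] at hτ; nlinarith [hτ.2, hs.2])
      · exact (hg'c.mul (continuous_const.sub hgc)).continuousOn
    have hPint : IntervalIntegrable (fun τ => α * (t - τ) ^ (-α - 1) * F τ) volume a s :=
      hcont1.intervalIntegrable
    have hhint : IntervalIntegrable h volume a s := hcont2.intervalIntegrable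
    have hftc := intervalIntegral.integral_eq_sub_of_hasDerivAt huder
      (hPint.sub hhint)
    rw [intervalIntegral.integral_sub hPint hhint] at hftc
    have hPnn : 0 ≤ ∫ τ in a..s, α * (t - τ) ^ (-α - 1) * F τ := by
      apply intervalIntegral.integral_nonneg hs.1
      intro τ hτ
      have : (0:ℝ) ≤ (t - τ) ^ (-α - 1) := Real.rpow_nonneg (by linarith [hτ.2, hs.2]) _
      have := hFnn τ
      positivity
    have huann : 0 ≤ u a := by
      have : (0:ℝ) ≤ (t - a) ^ (-α) := Real.rpow_nonneg (by linarith) _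
      have := hFnn a
      positivity
    have : I s = (∫ τ in a..s, α * (t - τ) ^ (-α - 1) * F τ) - u s + u a := by
      simp only [hI]; linarith [hftc]
    linarith
  -- bound: -u s ≥ -(L^2/2) * (t-s)^(2-α)
  have hub : ∀ s ∈ Set.Ico a t, u s ≤ L ^ 2 / 2 * (t - s) ^ ((2:ℝ) - α) := by
    intro s hs
    have hts : 0 < t - s := by linarith [hs.2]
    have h1 : |g t - g s| ≤ L * (t - s) := hLip s ⟨hs.1, hs.2.le⟩
    have h2 : F s ≤ (L * (t - s)) ^ 2 / 2 := by
      have := sq_abs (g t - g s)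
      have h3 : (g t - g s) ^ 2 ≤ (L * (t - s)) ^ 2 := by
        rw [← sq_abs (g t - g s)]
        exact pow_le_pow_left₀ (abs_nonneg _) h1 2
      simp only [hF]
      linarith
    have hpnn : (0:ℝ) ≤ (t - s) ^ (-α) := Real.rpow_nonneg hts.le _
    have : u s ≤ (t - s) ^ (-α) * ((L * (t - s)) ^ 2 / 2) := by
      exact mul_le_mul_of_nonneg_left h2 hpnn
    refine this.trans (le_of_eq ?_)
    have hsq : ((t - s) ^ 2 : ℝ) = (t - s) ^ (2:ℝ) := by
      rw [← Real.rpow_natCast (t - s) 2]; norm_num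
    rw [mul_pow]
    rw [show (t - s) ^ (-α) * (L ^ 2 * (t - s) ^ 2 / 2)
        = L ^ 2 / 2 * ((t - s) ^ (-α) * (t - s) ^ 2) by ring, hsq,
      ← Real.rpow_add hts]
    ring_nf
  -- continuity of I at t from the left
  have hIcont : Filter.Tendsto I (nhdsWithin t (Set.Iio t)) (nhds (I t)) := by
    have hc : ContinuousOn I (Set.uIcc a t) :=
      intervalIntegral.continuousOn_primitive_interval' hint Set.left_mem_uIcc
    have hct : Filter.Tendsto I (nhdsWithin t (Set.uIcc a t)) (nhds (I t)) :=
      hc t Set.right_mem_uIcc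
    refine hct.mono_left (nhdsWithin_le_of_mem ?_)
    apply Filter.mem_of_superset (Ioo_mem_nhdsLT_of_mem ⟨hat, le_rfl⟩)
    rw [Set.uIcc_of_le hat.le]
    exact Set.Ioo_subset_Icc_self
  -- the bound tends to 0
  have hbnd : Filter.Tendsto (fun s => -(L ^ 2 / 2 * (t - s) ^ ((2:ℝ) - α)))
      (nhdsWithin t (Set.Iio t)) (nhds 0) := by
    have h1 : Filter.Tendsto (fun s : ℝ => t - s) (nhdsWithin t (Set.Iio t)) (nhds 0) := by
      have : Filter.Tendsto (fun s : ℝ => t - s) (nhds t) (nhds (t - t)) :=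
        (continuous_const.sub continuous_id).tendsto t
      simpa using this.mono_left nhdsWithin_le_nhds
    have h2 : Filter.Tendsto (fun y : ℝ => y ^ ((2:ℝ) - α)) (nhds 0) (nhds 0) := by
      have hc : ContinuousAt (fun y : ℝ => y ^ ((2:ℝ) - α)) 0 :=
        Real.continuousAt_rpow_const 0 _ (Or.inr (by linarith))
      have h0 : (0:ℝ) ^ ((2:ℝ) - α) = 0 := Real.zero_rpow (by linarith)
      simpa [ContinuousAt, h0] using hc
    have := (h2.comp h1).const_mul (L ^ 2 / 2)
    simpa using this.neg
  -- conclude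
  have hIt : 0 ≤ I t := by
    refine le_of_tendsto_of_tendsto hbnd hIcont ?_
    filter_upwards [Ioo_mem_nhdsLT_of_mem (Set.mem_Ioc.mpr ⟨hat, le_rfl⟩)] with s hs
    have hs' : s ∈ Set.Ico a t := ⟨hs.1.le, hs.2⟩
    have := main s hs'
    have := hub s hs'
    linarith
  simpa [hI, hh] using hIt

theorem stmt14 (n : ℕ) (hn : 0 < n) (α ω t₀ t : ℝ) (hα0 : 0 < α) (hα1 : α < 1)
    (hω : 0 < ω) (x : ℝ → ℝ) (hx : ContDiff ℝ 1 x) (ht : t₀ ≤ t)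
    (m : ℕ) (hm : 1 ≤ m) :
    smD α ω t₀ (fun τ => x τ ^ (2 ^ m)) t
      ≤ 2 * (x t) ^ (2 ^ (m - 1)) * smD α ω t₀ (fun τ => x τ ^ (2 ^ (m - 1))) t := by
  set a : ℝ := max t₀ (t - ω) with ha
  have hat : a ≤ t := max_le ht (by linarith)
  set k : ℕ := 2 ^ (m - 1) with hk
  have hk1 : 1 ≤ k := Nat.one_le_two_pow
  have h2m : 2 ^ m = 2 * k := by
    rw [hk, ← pow_succ']
    congr 1
    omega
  rcases eq_or_lt_of_le hat with heq | hlt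
  · rw [smD, smD, ← ha, ← heq]
    simp
  set g : ℝ → ℝ := fun τ => x τ ^ k with hg
  have hgC : ContDiff ℝ 1 g := hx.pow k
  have hxd : ∀ τ : ℝ, HasDerivAt x (deriv x τ) τ := fun τ =>
    ((hx.differentiable one_ne_zero) τ).hasDerivAt
  have hgd : ∀ τ : ℝ, deriv g τ = (k : ℝ) * x τ ^ (k - 1) * deriv x τ := fun τ =>
    ((hxd τ).pow k).deriv
  have hd2 : ∀ τ : ℝ, deriv (fun τ => x τ ^ (2 ^ m)) τ = 2 * g τ * deriv g τ := by
    intro τ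
    rw [h2m]
    rw [HasDerivAt.deriv (f := fun τ => x τ ^ (2 * k)) ((hxd τ).pow (2 * k)), hgd τ]
    have hpow : x τ ^ (2 * k - 1) = x τ ^ k * x τ ^ (k - 1) := by
      rw [← pow_add]
      congr 1
      omega
    rw [hpow, hg]
    push_cast
    ring
  have hΓ : 0 < Real.Gamma (1 - α) := Real.Gamma_pos_of_pos (by linarith)
  have hgc : Continuous g := hgC.continuous
  have hg'c : Continuous (deriv g) := hgC.continuous_deriv le_rfl
  have hint1 : IntervalIntegrable (fun τ => (t - τ) ^ (-α) * (2 * g t * deriv g τ)) volume a t :=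
    smD_pow_int α hα0 hα1 a t hat _ (continuous_const.mul hg'c)
  have hint2 : IntervalIntegrable (fun τ => (t - τ) ^ (-α) * (2 * g τ * deriv g τ)) volume a t :=
    smD_pow_int α hα0 hα1 a t hat _ (((continuous_const.mul hgc)).mul hg'c)
  have hkey := key_nonneg α hα0 hα1 a t hlt g hgC
  -- rewrite both smD terms
  have hLHS : smD α ω t₀ (fun τ => x τ ^ (2 ^ m)) t
      = (1 / Real.Gamma (1 - α)) * ∫ τ in a..t, (t - τ) ^ (-α) * (2 * g τ * deriv g τ) := by
    rw [smD, ← ha]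
    congr 1
    apply intervalIntegral.integral_congr
    intro τ _
    dsimp only
    rw [hd2 τ]
  have hRHS : 2 * (x t) ^ (2 ^ (m - 1)) * smD α ω t₀ (fun τ => x τ ^ (2 ^ (m - 1))) t
      = (1 / Real.Gamma (1 - α)) * ∫ τ in a..t, (t - τ) ^ (-α) * (2 * g t * deriv g τ) := by
    rw [smD, ← ha]
    rw [show (∫ τ in a..t, (t - τ) ^ (-α) * (2 * g t * deriv g τ))
        = 2 * g t * ∫ τ in a..t, (t - τ) ^ (-α) * deriv g τ by
      rw [← intervalIntegral.integral_const_mul]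
      apply intervalIntegral.integral_congr
      intro τ _
      ring]
    simp only [hg, hk]
    ring
  rw [hLHS, hRHS]
  have hdiff : (∫ τ in a..t, (t - τ) ^ (-α) * (2 * g t * deriv g τ))
      - (∫ τ in a..t, (t - τ) ^ (-α) * (2 * g τ * deriv g τ))
      = 2 * ∫ τ in a..t, (t - τ) ^ (-α) * (deriv g τ * (g t - g τ)) := by
    rw [← intervalIntegral.integral_sub hint1 hint2, ← intervalIntegral.integral_const_mul]
    apply intervalIntegral.integral_congr
    intro τ _
    ring
  have h2 : 0 ≤ (∫ τ in a..t, (t - τ) ^ (-α) * (2 * g t * deriv g τ))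
      - (∫ τ in a..t, (t - τ) ^ (-α) * (2 * g τ * deriv g τ)) := by
    rw [hdiff]; linarith
  have hΓ' : 0 < 1 / Real.Gamma (1 - α) := by positivity
  nlinarith [h2]
end

section
/- Let 0 < α < 1, ω > 0, t₀ ∈ ℝ, and x : [t₀-ω, ∞) → ℝ continuously differentiable. Then for t > t₀ + ω: ᶜD^α_{t₀} x(t) = D̃x(t) + (1/Γ(1-α)) [ x(t-ω)/ω^α − x(t₀)/(t-t₀)^α − α ∫_{t₀}^{t-ω} (t-τ)^{-α-1} x(τ) dτ ], where ᶜD^α_{t₀} is the Caputo derivative with lower limit t₀ and D̃ is the short memory derivative with lower limit t-ω. -/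
open MeasureTheory

theorem stmt19 (α ω t₀ t : ℝ) (hα0 : 0 < α) (hα1 : α < 1) (hω : 0 < ω)
    (x : ℝ → ℝ) (hx : ContDiffOn ℝ 1 x (Set.Ici (t₀ - ω))) (ht : t > t₀ + ω) :
    (1 / Real.Gamma (1 - α)) * ∫ τ in t₀..t, (t - τ) ^ (-α) * deriv x τ
      = ((1 / Real.Gamma (1 - α)) * ∫ τ in (t - ω)..t, (t - τ) ^ (-α) * deriv x τ)
        + (1 / Real.Gamma (1 - α)) *
            (x (t - ω) / ω ^ α - x t₀ / (t - t₀) ^ α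
              - α * ∫ τ in t₀..(t - ω), (t - τ) ^ (-α - 1) * x τ) := by
  have ht' : t₀ < t - ω := by linarith
  have htt : t₀ < t := by linarith
  -- continuity of deriv x on Ioi (t₀ - ω)
  have hderivWithin : ContinuousOn (derivWithin x (Set.Ici (t₀ - ω))) (Set.Ici (t₀ - ω)) :=
    hx.continuousOn_derivWithin (uniqueDiffOn_Ici _) le_rfl
  have hcderiv : ContinuousOn (deriv x) (Set.Ioi (t₀ - ω)) := by
    refine (hderivWithin.mono Set.Ioi_subset_Ici_self).congr ?_
    intro τ hτ
    exact (derivWithin_of_mem_nhds (Ici_mem_nhds hτ)).symm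
  have hIccIoi : Set.Icc t₀ t ⊆ Set.Ioi (t₀ - ω) := fun τ hτ => by
    simp only [Set.mem_Ioi]; linarith [hτ.1]
  have hcd : ContinuousOn (deriv x) (Set.Icc t₀ t) := hcderiv.mono hIccIoi
  -- differentiability of x on Ioi
  have hdiff : ∀ τ ∈ Set.Icc t₀ t, HasDerivAt x (deriv x τ) τ := by
    intro τ hτ
    have h1 : ContDiffAt ℝ 1 x τ := hx.contDiffAt (Ici_mem_nhds (hIccIoi hτ))
    exact (h1.differentiableAt one_ne_zero).hasDerivAt
  -- integrability of the weight
  have hweight : ∀ a b : ℝ, IntervalIntegrable (fun τ => (t - τ) ^ (-α)) volume a b := by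
    intro a b
    have h0 : IntervalIntegrable (fun u : ℝ => u ^ (-α)) volume (t - a) (t - b) :=
      intervalIntegral.intervalIntegrable_rpow' (by linarith)
    have := h0.comp_sub_left t
    simpa using this
  -- integrability of the full integrand on subintervals of [t₀, t]
  have hint : ∀ a b : ℝ, a ∈ Set.Icc t₀ t → b ∈ Set.Icc t₀ t →
      IntervalIntegrable (fun τ => (t - τ) ^ (-α) * deriv x τ) volume a b := by
    intro a b ha hb
    refine (hweight a b).mul_continuousOn ?_
    refine hcd.mono ?_
    exact Set.uIcc_subset_Icc ha hb
  have hi1 : IntervalIntegrable (fun τ => (t - τ) ^ (-α) * deriv x τ) volume t₀ (t - ω) :=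
    hint _ _ ⟨le_refl _, htt.le⟩ ⟨ht'.le, by linarith⟩
  have hi2 : IntervalIntegrable (fun τ => (t - τ) ^ (-α) * deriv x τ) volume (t - ω) t :=
    hint _ _ ⟨ht'.le, by linarith⟩ ⟨htt.le, le_refl _⟩
  have hsplit : (∫ τ in t₀..(t - ω), (t - τ) ^ (-α) * deriv x τ)
      + (∫ τ in (t - ω)..t, (t - τ) ^ (-α) * deriv x τ)
      = ∫ τ in t₀..t, (t - τ) ^ (-α) * deriv x τ :=
    intervalIntegral.integral_add_adjacent_intervals hi1 hi2
  -- integration by parts on [t₀, t-ω]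
  have huIcc : Set.uIcc t₀ (t - ω) = Set.Icc t₀ (t - ω) := Set.uIcc_of_le ht'.le
  have hupos : ∀ τ ∈ Set.uIcc t₀ (t - ω), 0 < t - τ := by
    intro τ hτ
    rw [huIcc] at hτ
    linarith [hτ.2]
  have hu : ∀ τ ∈ Set.uIcc t₀ (t - ω),
      HasDerivAt (fun s => (t - s) ^ (-α)) (α * (t - τ) ^ (-α - 1)) τ := by
    intro τ hτ
    have h1 : HasDerivAt (fun s : ℝ => t - s) (-1) τ := by
      simpa using (hasDerivAt_id τ).const_sub t
    have h2 := h1.rpow_const (p := -α) (Or.inl (hupos τ hτ).ne')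
    convert h2 using 1
    ring
  have hv : ∀ τ ∈ Set.uIcc t₀ (t - ω), HasDerivAt x (deriv x τ) τ := by
    intro τ hτ
    rw [huIcc] at hτ
    exact hdiff τ ⟨hτ.1, by linarith [hτ.2]⟩
  have hu' : IntervalIntegrable (fun τ => α * (t - τ) ^ (-α - 1)) volume t₀ (t - ω) := by
    apply ContinuousOn.intervalIntegrable
    apply ContinuousOn.const_smul ?_ α |>.congr (fun τ _ => rfl)
    intro τ hτ
    exact ((continuousOn_const.sub continuousOn_id).rpow_const
      (fun s hs => Or.inl (hupos s hs).ne')) τ hτ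
  have hv' : IntervalIntegrable (deriv x) volume t₀ (t - ω) := by
    apply ContinuousOn.intervalIntegrable
    refine hcd.mono ?_
    rw [huIcc]
    exact Set.Icc_subset_Icc le_rfl (by linarith)
  have hibp := intervalIntegral.integral_mul_deriv_eq_deriv_mul hu hv hu' hv'
  -- simplify the boundary terms
  have hωt : t - (t - ω) = ω := by ring
  have hpull : (∫ τ in t₀..(t - ω), (α * (t - τ) ^ (-α - 1)) * x τ)
      = α * ∫ τ in t₀..(t - ω), (t - τ) ^ (-α - 1) * x τ := by
    rw [← intervalIntegral.integral_const_mul]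
    congr 1
    ext τ
    ring
  rw [hibp, hωt] at hsplit
  rw [← hsplit, hpull] at *
  have e1 : ω ^ (-α) * x (t - ω) = x (t - ω) / ω ^ α := by
    rw [Real.rpow_neg hω.le]; ring
  have e2 : (t - t₀) ^ (-α) * x t₀ = x t₀ / (t - t₀) ^ α := by
    rw [Real.rpow_neg (by linarith : (0:ℝ) ≤ t - t₀)]; ring
  rw [e1, e2]
  ring
end
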